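/- Let g : ℝ → ℝ be twice continuously differentiable with g, g', g'' ∈ L²(ℝ), and with g(x) → 0 and g'(x) → 0 as |x| → ∞. Then ‖g'‖_{L²}² ≤ ‖g‖_{L²} · ‖g''‖_{L²}. -/

import Mathlib

open MeasureTheory Filter Set intervalIntegral

/-- The `L²(ℝ)` norm `(∫ℝ |g(x)|² dx)^(1/2)`. -/
noncomputable def L2Norm (g : ℝ → ℝ) : ℝ := (∫ x : ℝ, (g x) ^ 2) ^ ((1 : ℝ) / 2)

/-- `g ∈ L²(ℝ)`, i.e. `∫ℝ |g(x)|² dx < ∞`. -/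
def MemL2 (g : ℝ → ℝ) : Prop := MeasureTheory.Integrable fun x => (g x) ^ 2

/-- interpolation inequality. If `g ∈ C²` with `g, g', g'' ∈ L²(ℝ)`
and `g(x), g'(x) → 0` as `|x| → ∞`, then `‖g'‖² ≤ ‖g‖ ‖g''‖`. -/
theorem deriv_interpolation
    (g : ℝ → ℝ) (hg : ContDiff ℝ 2 g)
    (hL2 : MemL2 g) (hL2' : MemL2 (deriv g)) (hL2'' : MemL2 (iteratedDeriv 2 g))
    (hdecay : Tendsto g (cocompact ℝ) (nhds 0))
    (hdecay' : Tendsto (deriv g) (cocompact ℝ) (nhds 0)) :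
    L2Norm (deriv g) ^ 2 ≤ L2Norm g * L2Norm (iteratedDeriv 2 g) := by
  have hg' : ContDiff ℝ 1 (deriv g) := by
    have : ContDiff ℝ (1+1) g := by norm_num; exact hg
    exact (contDiff_succ_iff_deriv.mp this).2.2
  have hgd : Differentiable ℝ g := hg.differentiable (by norm_num)
  have hg'd : Differentiable ℝ (deriv g) := hg'.differentiable (by norm_num)
  have hcont_g : Continuous g := hg.continuous
  have hcont_g' : Continuous (deriv g) := hg'.continuous
  have hgg : ∀ x, iteratedDeriv 2 g x = deriv (deriv g) x := by
    intro x
    rw [show (2 : ℕ) = 1 + 1 from rfl, iteratedDeriv_succ, iteratedDeriv_one]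
  have hcont_g'' : Continuous (iteratedDeriv 2 g) := hg.continuous_iteratedDeriv 2 le_rfl
  -- F = g * g' and its derivative
  set F : ℝ → ℝ := fun x => g x * deriv g x with hF
  set F' : ℝ → ℝ := fun x => (deriv g x) ^ 2 + g x * iteratedDeriv 2 g x with hF'
  have hder : ∀ x, HasDerivAt F (F' x) x := by
    intro x
    have h1 : HasDerivAt g (deriv g x) x := (hgd x).hasDerivAt
    have h2 : HasDerivAt (deriv g) (iteratedDeriv 2 g x) x := by
      rw [hgg x]; exact (hg'd x).hasDerivAt
    have : HasDerivAt F (deriv g x * deriv g x + g x * iteratedDeriv 2 g x) x := h1.mul h2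
    convert this using 1
    show deriv g x ^ 2 + g x * iteratedDeriv 2 g x = deriv g x * deriv g x + g x * iteratedDeriv 2 g x; ring
  -- integrability of g * g''
  have hmul : Integrable (fun x => g x * iteratedDeriv 2 g x) := by
    refine Integrable.mono' ((hL2.add hL2'').div_const 2) ?_ ?_
    · exact (hcont_g.mul hcont_g'').aestronglyMeasurable
    · refine Filter.Eventually.of_forall fun x => ?_
      calc ‖g x * iteratedDeriv 2 g x‖ = |g x * iteratedDeriv 2 g x| := rfl
        _ ≤ (g x ^ 2 + iteratedDeriv 2 g x ^ 2) / 2 := by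
            rw [abs_mul]
            nlinarith [abs_nonneg (g x), abs_nonneg (iteratedDeriv 2 g x),
              sq_abs (g x), sq_abs (iteratedDeriv 2 g x),
              sq_nonneg (|g x| - |iteratedDeriv 2 g x|)]
  have hintF' : Integrable F' := hL2'.add hmul
  -- limits of F at ±∞
  have hcc : cocompact ℝ = atBot ⊔ atTop := cocompact_eq_atBot_atTop
  have htop : Tendsto F atTop (nhds 0) := by
    have h1 : Tendsto g atTop (nhds 0) := hdecay.mono_left (hcc ▸ le_sup_right)
    have h2 : Tendsto (deriv g) atTop (nhds 0) := hdecay'.mono_left (hcc ▸ le_sup_right)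
    simpa using h1.mul h2
  have hbot : Tendsto F atBot (nhds 0) := by
    have h1 : Tendsto g atBot (nhds 0) := hdecay.mono_left (hcc ▸ le_sup_left)
    have h2 : Tendsto (deriv g) atBot (nhds 0) := hdecay'.mono_left (hcc ▸ le_sup_left)
    simpa using h1.mul h2
  -- ∫ F' = 0
  have hsplit : ∫ x, F' x = (∫ x in Iic (0:ℝ), F' x) + ∫ x in Ioi (0:ℝ), F' x :=
    (integral_Iic_add_Ioi hintF'.integrableOn hintF'.integrableOn).symm
  have hIic : ∫ x in Iic (0:ℝ), F' x = F 0 - 0 :=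
    integral_Iic_of_hasDerivAt_of_tendsto' (fun x _ => hder x) hintF'.integrableOn hbot
  have hIoi : ∫ x in Ioi (0:ℝ), F' x = 0 - F 0 :=
    integral_Ioi_of_hasDerivAt_of_tendsto' (fun x _ => hder x) hintF'.integrableOn htop
  have hzero : ∫ x, F' x = 0 := by rw [hsplit, hIic, hIoi]; ring
  have key : ∫ x, (deriv g x) ^ 2 = -∫ x, g x * iteratedDeriv 2 g x := by
    rw [hF'] at hzero
    rw [integral_add hL2' hmul] at hzero
    linarith
  -- Cauchy–Schwarz
  have hmemg : MemLp g 2 (volume : Measure ℝ) :=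
    (memLp_two_iff_integrable_sq hcont_g.aestronglyMeasurable).2 hL2
  have hmemg'' : MemLp (iteratedDeriv 2 g) 2 (volume : Measure ℝ) :=
    (memLp_two_iff_integrable_sq hcont_g''.aestronglyMeasurable).2 hL2''
  have hCS : ∫ x, |g x| * |iteratedDeriv 2 g x| ≤
      (∫ x, |g x| ^ (2:ℝ)) ^ ((1:ℝ)/2) * (∫ x, |iteratedDeriv 2 g x| ^ (2:ℝ)) ^ ((1:ℝ)/2) := by
    have h2 : (ENNReal.ofReal (2:ℝ)) = 2 := by norm_num
    refine integral_mul_le_Lp_mul_Lq_of_nonneg (by constructor <;> norm_num)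
      (Filter.Eventually.of_forall fun x => abs_nonneg _)
      (Filter.Eventually.of_forall fun x => abs_nonneg _) ?_ ?_
    · rw [h2]; exact hmemg.abs
    · rw [h2]; exact hmemg''.abs
  have habs : ∀ h : ℝ → ℝ, ∫ x, |h x| ^ (2:ℝ) = ∫ x, h x ^ 2 := by
    intro h
    refine integral_congr_ae (Filter.Eventually.of_forall fun x => ?_)
    simp only [show ((2:ℝ)) = ((2:ℕ):ℝ) by norm_num, Real.rpow_natCast, sq_abs]
  have hCS' : -∫ x, g x * iteratedDeriv 2 g x ≤
      (∫ x, g x ^ 2) ^ ((1:ℝ)/2) * (∫ x, iteratedDeriv 2 g x ^ 2) ^ ((1:ℝ)/2) := by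
    calc -∫ x, g x * iteratedDeriv 2 g x ≤ |∫ x, g x * iteratedDeriv 2 g x| :=
          neg_le_abs _
      _ ≤ ∫ x, |g x| * |iteratedDeriv 2 g x| := by
          simpa [Real.norm_eq_abs, abs_mul] using
            MeasureTheory.norm_integral_le_integral_norm
              (μ := (volume : Measure ℝ)) (fun x => g x * iteratedDeriv 2 g x)
      _ ≤ _ := by rw [← habs g, ← habs (iteratedDeriv 2 g)]; exact hCS
  -- assemble
  have hnn : 0 ≤ ∫ x, (deriv g x) ^ 2 := integral_nonneg fun x => sq_nonneg _
  have hL2sq : L2Norm (deriv g) ^ 2 = ∫ x, (deriv g x) ^ 2 := by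
    rw [L2Norm, ← Real.rpow_natCast _ 2, ← Real.rpow_mul hnn]
    norm_num
  rw [hL2sq, L2Norm, L2Norm, key]
  exact hCS'
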